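/- Summation-by-parts cell-average identity: for the flux-differencing nodal DG scheme on LGL nodes with a symmetric two-point volume flux f_S, multiplying the nodal equations by the quadrature weights ω_α and summing over α causes the volume flux-differencing term to telescope: ∑_{α,β} ω_α · 2 D_{αβ} f_S(w_α, w_β) = f_S(w_k, w_k) − f_S(w_0, w_0) = f(w_k) − f(w_0), where f_S is consistent (f_S(w,w) = f(w)) and symmetric, and D satisfies the SBP property WD + DᵀW = B with B = diag(−1,0,...,0,1). -/
import Mathlib


/-- SBP cell-average identity: the weighted flux-differencing volume term
telescopes to the boundary flux difference. -/
theorem sbp_flux_differencing_telescopes {k n : ℕ} (hk : 1 ≤ k)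
    (ω : Fin (k + 1) → ℝ) (hω : ∀ i, 0 < ω i)
    (D : Matrix (Fin (k + 1)) (Fin (k + 1)) ℝ)
    (hSBP : ∀ i j, ω i * D i j + D j i * ω j =
      if i = j ∧ i = 0 then -1 else if i = j ∧ i = Fin.last k then 1 else 0)
    (hrow : ∀ i, ∑ j, D i j = 0)
    (fS : (Fin n → ℝ) → (Fin n → ℝ) → (Fin n → ℝ))
    (f : (Fin n → ℝ) → (Fin n → ℝ))
    (hsymm : ∀ a b, fS a b = fS b a)
    (hcons : ∀ a, fS a a = f a)
    (w : Fin (k + 1) → (Fin n → ℝ)) :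
    ∑ α, ∑ β, (ω α * (2 * D α β)) • fS (w α) (w β)
      = f (w (Fin.last k)) - f (w 0) := by
  funext x
  simp only [Finset.sum_apply, Pi.smul_apply, Pi.sub_apply, smul_eq_mul]
  set g : Fin (k + 1) → Fin (k + 1) → ℝ := fun α β => fS (w α) (w β) x with hg
  have hgsymm : ∀ α β, g α β = g β α := fun α β => by rw [hg]; simp [hsymm]
  have hlast : (0 : Fin (k + 1)) ≠ Fin.last k := by
    intro h
    have := Fin.val_eq_of_eq h
    simp [Fin.last] at this
    omega
  have step1 : ∑ α, ∑ β, ω α * (2 * D α β) * g α β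
      = ∑ α, ∑ β, (ω α * D α β + D β α * ω β) * g α β := by
    have h2 : ∀ α β, ω α * (2 * D α β) * g α β
        = ω α * D α β * g α β + ω α * D α β * g α β := by intro α β; ring
    simp only [h2, add_mul, Finset.sum_add_distrib]
    congr 1
    rw [Finset.sum_comm]
    apply Finset.sum_congr rfl; intro α _
    apply Finset.sum_congr rfl; intro β _
    rw [hgsymm β α]; ring
  rw [step1]
  have step2 : ∀ α : Fin (k+1), ∑ β, (ω α * D α β + D β α * ω β) * g α β
      = (if α = 0 then -1 else if α = Fin.last k then 1 else 0) * g α α := by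
    intro α
    have : ∀ β, (ω α * D α β + D β α * ω β) * g α β
        = (if α = β ∧ α = 0 then -1 else if α = β ∧ α = Fin.last k then 1 else 0) * g α β := by
      intro β; rw [hSBP α β]
    simp only [this]
    rw [Finset.sum_eq_single α]
    · simp
    · intro b _ hb
      simp [Ne.symm hb, fun h : α = b => hb h.symm]
    · simp
  simp only [step2]
  have : ∀ α : Fin (k+1), (if α = 0 then (-1:ℝ) else if α = Fin.last k then 1 else 0) * g α α
      = (if α = 0 then -g 0 0 else 0) + (if α = Fin.last k then g (Fin.last k) (Fin.last k) else 0) := by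
    intro α
    by_cases h0 : α = 0
    · subst h0; rw [if_pos rfl, if_pos rfl, if_neg hlast]; ring
    · by_cases hl : α = Fin.last k
      · subst hl; rw [if_neg h0, if_pos rfl, if_neg h0, if_pos rfl]; ring
      · simp [h0, hl]
  simp only [this, Finset.sum_add_distrib, Finset.sum_ite_eq', Finset.mem_univ, if_true]
  have hc0 : g 0 0 = f (w 0) x := by rw [hg]; simp [hcons]
  have hcl : g (Fin.last k) (Fin.last k) = f (w (Fin.last k)) x := by rw [hg]; simp [hcons]
  rw [hc0, hcl]; ring
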